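/- Let θ₁ > √(1+2√2) and θ > ξ₂, where ξ₂ = (2((θ₁+1)²(θ₁−1)+2) + 4√((θ₁+1)³+1)) / ((θ₁²−1)²−8). Then the quadratic Q(u) = θu² + (θ₁+1)(θ(1−θ₁)+2)u + 2(θ+1) has two distinct real roots u₂* < u₁*, both of which are positive. -/

import Mathlib

/-- Helper: a quadratic with positive leading coefficient, negative middle
coefficient, positive constant term and positive discriminant has two
distinct positive roots. -/
lemma quad_two_pos_roots (a b c : ℝ) (ha : 0 < a) (hc : 0 < c) (hb : b < 0)
    (hD : 0 < b ^ 2 - 4 * a * c) :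
    ∃ u₁ u₂ : ℝ, 0 < u₂ ∧ u₂ < u₁ ∧
      a * u₂ ^ 2 + b * u₂ + c = 0 ∧ a * u₁ ^ 2 + b * u₁ + c = 0 := by
  obtain ⟨s, hs0, hs2⟩ : ∃ s : ℝ, 0 < s ∧ s ^ 2 = b ^ 2 - 4 * a * c :=
    ⟨Real.sqrt _, Real.sqrt_pos.mpr hD, Real.sq_sqrt hD.le⟩
  have hane : (2 * a) ≠ 0 := by positivity
  have hslt : s < -b := by
    have hprod : (-b - s) * (-b + s) > 0 := by nlinarith
    nlinarith [hprod]
  have key : ∀ x : ℝ, x ^ 2 = b ^ 2 - 4 * a * c →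
      a * ((-b + x) / (2 * a)) ^ 2 + b * ((-b + x) / (2 * a)) + c = 0 := by
    intro x hx
    field_simp
    linear_combination hx
  refine ⟨(-b + s) / (2 * a), (-b - s) / (2 * a), ?_, ?_, ?_, key s hs2⟩
  · exact div_pos (by linarith) (by linarith)
  · apply div_lt_div_of_pos_right (by linarith) (by linarith)
  · rw [show (-b - s) = (-b + -s) by ring]
    exact key (-s) (by rw [show (-s) ^ 2 = s ^ 2 by ring]; exact hs2)

theorem potts_quadratic_two_positive_roots (θ θ₁ : ℝ)
    (hθ₁ : θ₁ > Real.sqrt (1 + 2 * Real.sqrt 2))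
    (hθ : θ > (2 * ((θ₁ + 1) ^ 2 * (θ₁ - 1) + 2) +
        4 * Real.sqrt ((θ₁ + 1) ^ 3 + 1)) / ((θ₁ ^ 2 - 1) ^ 2 - 8)) :
    ∃ u₁ u₂ : ℝ, 0 < u₂ ∧ u₂ < u₁ ∧
      θ * u₂ ^ 2 + (θ₁ + 1) * (θ * (1 - θ₁) + 2) * u₂ + 2 * (θ + 1) = 0 ∧
      θ * u₁ ^ 2 + (θ₁ + 1) * (θ * (1 - θ₁) + 2) * u₁ + 2 * (θ + 1) = 0 := by
  have h2 : (0:ℝ) < Real.sqrt 2 := Real.sqrt_pos.mpr (by norm_num)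
  have hs2 : Real.sqrt 2 ^ 2 = 2 := Real.sq_sqrt (by norm_num)
  have h1le : (1:ℝ) ≤ 1 + 2 * Real.sqrt 2 := by nlinarith
  have ht1 : θ₁ > 1 := by
    have h := Real.sqrt_le_sqrt h1le
    rw [Real.sqrt_one] at h
    linarith
  have htsq : θ₁ ^ 2 > 1 + 2 * Real.sqrt 2 := by
    have := pow_lt_pow_left₀ hθ₁ (Real.sqrt_nonneg _) (two_ne_zero)
    rwa [Real.sq_sqrt (by linarith : (0:ℝ) ≤ 1 + 2 * Real.sqrt 2)] at this
  have hA : (0:ℝ) < (θ₁ ^ 2 - 1) ^ 2 - 8 := by nlinarith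
  obtain ⟨R, hRdef⟩ : ∃ R : ℝ, R = Real.sqrt ((θ₁ + 1) ^ 3 + 1) := ⟨_, rfl⟩
  have hR2 : R ^ 2 = (θ₁ + 1) ^ 3 + 1 := by rw [hRdef]; exact Real.sq_sqrt (by positivity)
  have hRpos : 0 < R := by rw [hRdef]; exact Real.sqrt_pos.mpr (by positivity)
  obtain ⟨A, hAdef⟩ : ∃ A : ℝ, A = (θ₁ ^ 2 - 1) ^ 2 - 8 := ⟨_, rfl⟩
  obtain ⟨K, hKdef⟩ : ∃ K : ℝ, K = (θ₁ + 1) ^ 2 * (θ₁ - 1) + 2 := ⟨_, rfl⟩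
  have hApos : 0 < A := by rw [hAdef]; exact hA
  have hN : 2 * K + 4 * R < θ * A := by
    have := (div_lt_iff₀ hA).mp hθ
    rw [hKdef, hAdef, ← hRdef] at *
    linarith
  have hKpos : 0 < K := by rw [hKdef]; nlinarith
  have hθpos : 0 < θ := by nlinarith
  have hb : θ * (θ₁ - 1) > 2 := by
    -- θ*A > 2K + 4R > 2K = 2((θ₁+1)²(θ₁-1)+2), and A = (θ₁+1)²(θ₁-1)²-8
    rw [hAdef] at hN
    rw [hKdef] at hN
    nlinarith [hRpos, mul_pos hθpos (show (0:ℝ) < (θ₁+1)^2 by positivity)]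
  have hbneg : (θ₁ + 1) * (θ * (1 - θ₁) + 2) < 0 := by nlinarith
  have hkey : A * θ - 2 * K > 4 * R := by linarith
  have hsq : (4 * R) ^ 2 < (A * θ - 2 * K) ^ 2 :=
    pow_lt_pow_left₀ hkey (by positivity) (two_ne_zero)
  have hident : A * (((θ₁ + 1) * (θ * (1 - θ₁) + 2)) ^ 2 - 4 * θ * (2 * (θ + 1)))
      = (A * θ - 2 * K) ^ 2 - 16 * ((θ₁ + 1) ^ 3 + 1) := by
    rw [hAdef, hKdef]; ring
  have h16 : (4 * R) ^ 2 = 16 * ((θ₁ + 1) ^ 3 + 1) := by linear_combination 16 * hR2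
  have hAD : 0 < A * (((θ₁ + 1) * (θ * (1 - θ₁) + 2)) ^ 2 - 4 * θ * (2 * (θ + 1))) := by
    rw [hident, ← h16]; linarith
  have hD : 0 < ((θ₁ + 1) * (θ * (1 - θ₁) + 2)) ^ 2 - 4 * θ * (2 * (θ + 1)) := by
    rcases mul_pos_iff.mp hAD with ⟨_, h⟩ | ⟨h, _⟩
    · exact h
    · exact absurd hApos (not_lt.mpr h.le)
  exact quad_two_pos_roots θ ((θ₁ + 1) * (θ * (1 - θ₁) + 2)) (2 * (θ + 1))
    hθpos (by linarith) hbneg hD
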